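/- If shape posets S₁ and S₂ are disjoint and S₁ + S₂ denotes their disjoint sum (no comparabilities between the parts), then for any family of games indexed by S₁ + S₂, the ordered join (S₁ + S₂) ⋈ G equals the disjunctive sum (S₁ ⋈ G|_{S₁}) + (S₂ ⋈ G|_{S₂}) as games. -/

import Mathlib

universe u v

namespace SetTheory

inductive PGame : Type (u + 1)
  | mk : ∀ α β : Type u, (α → PGame) → (β → PGame) → PGame

namespace PGame

def LeftMoves : PGame → Type u
  | mk l _ _ _ => l

def RightMoves : PGame → Type u
  | mk _ r _ _ => r

def moveLeft : ∀ g : PGame, LeftMoves g → PGame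
  | mk _l _ L _ => L

def moveRight : ∀ g : PGame, RightMoves g → PGame
  | mk _ _r _ R => R

instance : Zero PGame :=
  ⟨⟨PEmpty, PEmpty, PEmpty.elim, PEmpty.elim⟩⟩

noncomputable instance : Add PGame.{u} :=
  ⟨fun x y => by
    induction x generalizing y with | mk xl xr _ _ IHxl IHxr => _
    induction y with | mk yl yr yL yR IHyl IHyr => _
    have y := mk yl yr yL yR
    refine ⟨xl ⊕ yl, xr ⊕ yr, Sum.rec ?_ ?_, Sum.rec ?_ ?_⟩
    · exact fun i => IHxl i y
    · exact IHyl
    · exact fun i => IHxr i y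
    · exact IHyr⟩

def Identical : PGame.{u} → PGame.{v} → Prop
  | mk _ _ xL xR, mk _ _ yL yR =>
    Relator.BiTotal (fun i j ↦ Identical (xL i) (yL j)) ∧
      Relator.BiTotal (fun i j ↦ Identical (xR i) (yR j))

infix:50 " ≡ " => PGame.Identical

end PGame

end SetTheory

def Nimber : Type (u + 1) := Ordinal.{u}

namespace Nimber

noncomputable instance : ConditionallyCompleteLinearOrderBot Nimber.{u} :=
  inferInstanceAs (ConditionallyCompleteLinearOrderBot Ordinal.{u})

end Nimber

namespace SetTheory

namespace PGame

noncomputable def grundyValue : PGame.{u} → Nimber.{u}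
  | mk _ _ L _ => sInf (Set.range fun i => grundyValue (L i))ᶜ

end PGame

end SetTheory

open SetTheory PGame Nimber

noncomputable section
open Classical in
/-- The state resulting from a (Left) move in component `i₀` of an ordered join:
all components strictly above `i₀` are replaced by the empty game `0`. -/
def ojNextL {S : Type} [PartialOrder S] (x : S → PGame) (i₀ : S) (j : (x i₀).LeftMoves) :
    S → PGame :=
  fun i => if i = i₀ then (x i₀).moveLeft j else if i₀ < i then 0 else x i

open Classical in
def ojNextR {S : Type} [PartialOrder S] (x : S → PGame) (i₀ : S) (j : (x i₀).RightMoves) :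
    S → PGame :=
  fun i => if i = i₀ then (x i₀).moveRight j else if i₀ < i then 0 else x i

/-- The move relation of the ordered join: `OJRel y x` iff `y` results from `x` by a single move. -/
def OJRel {S : Type} [PartialOrder S] (y x : S → PGame) : Prop :=
  (∃ i₀ j, y = ojNextL x i₀ j) ∨ (∃ i₀ j, y = ojNextR x i₀ j)

theorem ojrel_L {S : Type} [PartialOrder S] (x : S → PGame) (i₀ : S) (j : (x i₀).LeftMoves) :
    OJRel (ojNextL x i₀ j) x := Or.inl ⟨i₀, j, rfl⟩

theorem ojrel_R {S : Type} [PartialOrder S] (x : S → PGame) (i₀ : S) (j : (x i₀).RightMoves) :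
    OJRel (ojNextR x i₀ j) x := Or.inr ⟨i₀, j, rfl⟩

/-- The ordered join of a family of games, as a game, given a termination certificate. -/
def ojoinAcc {S : Type} [PartialOrder S] : ∀ x : S → PGame, Acc OJRel x → PGame := fun x h =>
  Acc.rec (motive := fun x _ => PGame)
    (fun x _ ih =>
      PGame.mk (Σ i₀ : S, (x i₀).LeftMoves) (Σ i₀ : S, (x i₀).RightMoves)
        (fun p => ih _ (ojrel_L x p.1 p.2))
        (fun p => ih _ (ojrel_R x p.1 p.2))) h

open Classical in
/-- The ordered join `S ⋈ G` of a family of games `G` over the poset `S`.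
(Defined as `0` in the degenerate non-terminating case.) -/
def ojoin {S : Type} [PartialOrder S] (x : S → PGame) : PGame :=
  if h : Acc OJRel x then ojoinAcc x h else 0

/-- The Grundy set `Γ₁(G)`: the set of Grundy numbers of the options of `G`. -/
def grundySet (G : PGame) : Set Nimber :=
  Set.range fun i => grundyValue (G.moveLeft i)
end

theorem identical_iff {x y : PGame} : (x ≡ y) ↔
    (Relator.BiTotal (fun i j => (x.moveLeft i ≡ y.moveLeft j)) ∧
      Relator.BiTotal (fun i j => (x.moveRight i ≡ y.moveRight j))) := by
  cases x; cases y; rfl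

theorem ojoin_eq {S : Type} [PartialOrder S] (x : S → PGame) (h : Acc OJRel x) :
    ojoin x = PGame.mk (Σ i₀ : S, (x i₀).LeftMoves) (Σ i₀ : S, (x i₀).RightMoves)
      (fun p => ojoin (ojNextL x p.1 p.2)) (fun p => ojoin (ojNextR x p.1 p.2)) := by
  rw [ojoin, dif_pos h]
  cases h with
  | intro x hx =>
    have e : ojoinAcc x (Acc.intro x hx) = PGame.mk (Σ i₀ : S, (x i₀).LeftMoves)
        (Σ i₀ : S, (x i₀).RightMoves)
        (fun p => ojoinAcc (ojNextL x p.1 p.2) (hx _ (ojrel_L x p.1 p.2)))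
        (fun p => ojoinAcc (ojNextR x p.1 p.2) (hx _ (ojrel_R x p.1 p.2))) := rfl
    rw [e]
    congr 1 <;> funext p
    · exact (dif_pos (hx _ (ojrel_L x p.1 p.2))).symm
    · exact (dif_pos (hx _ (ojrel_R x p.1 p.2))).symm

theorem elim_ojNextL_inl {S₁ S₂ : Type} [PartialOrder S₁] [PartialOrder S₂]
    (x : S₁ → PGame) (y : S₂ → PGame) (i₀ : S₁) (j : (x i₀).LeftMoves) :
    ojNextL (Sum.elim x y) (Sum.inl i₀) j = Sum.elim (ojNextL x i₀ j) y := by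
  funext s
  cases s with
  | inl i =>
    simp only [ojNextL, Sum.elim_inl]
    by_cases hi : i = i₀
    · subst hi; rw [if_pos rfl, if_pos rfl]
    · rw [if_neg (by simpa using hi), if_neg hi]
      by_cases hlt : i₀ < i
      · rw [if_pos (Sum.inl_lt_inl_iff.2 hlt), if_pos hlt]
      · rw [if_neg (by simpa using hlt), if_neg hlt]
  | inr i =>
    simp only [ojNextL, Sum.elim_inr]
    rw [if_neg (by simp), if_neg Sum.not_inl_lt_inr]

theorem elim_ojNextR_inl {S₁ S₂ : Type} [PartialOrder S₁] [PartialOrder S₂]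
    (x : S₁ → PGame) (y : S₂ → PGame) (i₀ : S₁) (j : (x i₀).RightMoves) :
    ojNextR (Sum.elim x y) (Sum.inl i₀) j = Sum.elim (ojNextR x i₀ j) y := by
  funext s
  cases s with
  | inl i =>
    simp only [ojNextR, Sum.elim_inl]
    by_cases hi : i = i₀
    · subst hi; rw [if_pos rfl, if_pos rfl]
    · rw [if_neg (by simpa using hi), if_neg hi]
      by_cases hlt : i₀ < i
      · rw [if_pos (Sum.inl_lt_inl_iff.2 hlt), if_pos hlt]
      · rw [if_neg (by simpa using hlt), if_neg hlt]
  | inr i =>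
    simp only [ojNextR, Sum.elim_inr]
    rw [if_neg (by simp), if_neg Sum.not_inl_lt_inr]

theorem elim_ojNextL_inr {S₁ S₂ : Type} [PartialOrder S₁] [PartialOrder S₂]
    (x : S₁ → PGame) (y : S₂ → PGame) (i₀ : S₂) (j : (y i₀).LeftMoves) :
    ojNextL (Sum.elim x y) (Sum.inr i₀) j = Sum.elim x (ojNextL y i₀ j) := by
  funext s
  cases s with
  | inl i =>
    simp only [ojNextL, Sum.elim_inl]
    rw [if_neg (by simp), if_neg Sum.not_inr_lt_inl]
  | inr i =>
    simp only [ojNextL, Sum.elim_inr]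
    by_cases hi : i = i₀
    · subst hi; rw [if_pos rfl, if_pos rfl]
    · rw [if_neg (by simpa using hi), if_neg hi]
      by_cases hlt : i₀ < i
      · rw [if_pos (Sum.inr_lt_inr_iff.2 hlt), if_pos hlt]
      · rw [if_neg (by simpa using hlt), if_neg hlt]

theorem elim_ojNextR_inr {S₁ S₂ : Type} [PartialOrder S₁] [PartialOrder S₂]
    (x : S₁ → PGame) (y : S₂ → PGame) (i₀ : S₂) (j : (y i₀).RightMoves) :
    ojNextR (Sum.elim x y) (Sum.inr i₀) j = Sum.elim x (ojNextR y i₀ j) := by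
  funext s
  cases s with
  | inl i =>
    simp only [ojNextR, Sum.elim_inl]
    rw [if_neg (by simp), if_neg Sum.not_inr_lt_inl]
  | inr i =>
    simp only [ojNextR, Sum.elim_inr]
    by_cases hi : i = i₀
    · subst hi; rw [if_pos rfl, if_pos rfl]
    · rw [if_neg (by simpa using hi), if_neg hi]
      by_cases hlt : i₀ < i
      · rw [if_pos (Sum.inr_lt_inr_iff.2 hlt), if_pos hlt]
      · rw [if_neg (by simpa using hlt), if_neg hlt]

theorem acc_left {S₁ S₂ : Type} [PartialOrder S₁] [PartialOrder S₂]
    {x : S₁ → PGame} {y : S₂ → PGame} (h : Acc OJRel (Sum.elim x y)) : Acc OJRel x := by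
  refine Subrelation.accessible (r := InvImage OJRel (fun x : S₁ → PGame => Sum.elim x y))
    (fun {a b} hab => ?_) (InvImage.accessible _ h)
  rcases hab with ⟨i₀, j, rfl⟩ | ⟨i₀, j, rfl⟩
  · exact Or.inl ⟨Sum.inl i₀, j, (elim_ojNextL_inl b y i₀ j).symm⟩
  · exact Or.inr ⟨Sum.inl i₀, j, (elim_ojNextR_inl b y i₀ j).symm⟩

theorem acc_right {S₁ S₂ : Type} [PartialOrder S₁] [PartialOrder S₂]
    {x : S₁ → PGame} {y : S₂ → PGame} (h : Acc OJRel (Sum.elim x y)) : Acc OJRel y := by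
  refine Subrelation.accessible (r := InvImage OJRel (fun y : S₂ → PGame => Sum.elim x y))
    (fun {a b} hab => ?_) (InvImage.accessible _ h)
  rcases hab with ⟨i₀, j, rfl⟩ | ⟨i₀, j, rfl⟩
  · exact Or.inl ⟨Sum.inr i₀, j, (elim_ojNextL_inr x b i₀ j).symm⟩
  · exact Or.inr ⟨Sum.inr i₀, j, (elim_ojNextR_inr x b i₀ j).symm⟩

open scoped PGame in
theorem main_aux {S₁ S₂ : Type} [PartialOrder S₁] [PartialOrder S₂] :
    ∀ (z : S₁ ⊕ S₂ → PGame), Acc OJRel z → ∀ (x : S₁ → PGame) (y : S₂ → PGame),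
      z = Sum.elim x y → ojoin z ≡ ojoin x + ojoin y := by
  intro z hz
  induction hz with
  | intro z hz ih =>
    rintro x y rfl
    have hacc : Acc OJRel (Sum.elim x y) := Acc.intro _ hz
    have hx : Acc OJRel x := acc_left hacc
    have hy : Acc OJRel y := acc_right hacc
    have key : ∀ (z' : S₁ ⊕ S₂ → PGame) (x' : S₁ → PGame) (y' : S₂ → PGame),
        OJRel z' (Sum.elim x y) → z' = Sum.elim x' y' →
        ojoin z' ≡ ojoin x' + ojoin y' := fun z' x' y' hr he => ih z' hr x' y' he
    rw [ojoin_eq _ hacc, ojoin_eq x hx, ojoin_eq y hy]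
    refine identical_iff.mpr ⟨⟨?_, ?_⟩, ⟨?_, ?_⟩⟩
    · rintro ⟨(i₀ | i₀), j⟩
      · exact ⟨Sum.inl ⟨i₀, j⟩, by
          have := key _ (ojNextL x i₀ j) y (ojrel_L _ (Sum.inl i₀) j) (elim_ojNextL_inl x y i₀ j)
          rw [ojoin_eq y hy] at this
          exact this⟩
      · exact ⟨Sum.inr ⟨i₀, j⟩, by
          have := key _ x (ojNextL y i₀ j) (ojrel_L _ (Sum.inr i₀) j) (elim_ojNextL_inr x y i₀ j)
          rw [ojoin_eq x hx] at this
          exact this⟩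
    · rintro (⟨i₀, j⟩ | ⟨i₀, j⟩)
      · exact ⟨⟨Sum.inl i₀, j⟩, by
          have := key _ (ojNextL x i₀ j) y (ojrel_L _ (Sum.inl i₀) j) (elim_ojNextL_inl x y i₀ j)
          rw [ojoin_eq y hy] at this
          exact this⟩
      · exact ⟨⟨Sum.inr i₀, j⟩, by
          have := key _ x (ojNextL y i₀ j) (ojrel_L _ (Sum.inr i₀) j) (elim_ojNextL_inr x y i₀ j)
          rw [ojoin_eq x hx] at this
          exact this⟩
    · rintro ⟨(i₀ | i₀), j⟩
      · exact ⟨Sum.inl ⟨i₀, j⟩, by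
          have := key _ (ojNextR x i₀ j) y (ojrel_R _ (Sum.inl i₀) j) (elim_ojNextR_inl x y i₀ j)
          rw [ojoin_eq y hy] at this
          exact this⟩
      · exact ⟨Sum.inr ⟨i₀, j⟩, by
          have := key _ x (ojNextR y i₀ j) (ojrel_R _ (Sum.inr i₀) j) (elim_ojNextR_inr x y i₀ j)
          rw [ojoin_eq x hx] at this
          exact this⟩
    · rintro (⟨i₀, j⟩ | ⟨i₀, j⟩)
      · exact ⟨⟨Sum.inl i₀, j⟩, by
          have := key _ (ojNextR x i₀ j) y (ojrel_R _ (Sum.inl i₀) j) (elim_ojNextR_inl x y i₀ j)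
          rw [ojoin_eq y hy] at this
          exact this⟩
      · exact ⟨⟨Sum.inr i₀, j⟩, by
          have := key _ x (ojNextR y i₀ j) (ojrel_R _ (Sum.inr i₀) j) (elim_ojNextR_inr x y i₀ j)
          rw [ojoin_eq x hx] at this
          exact this⟩


open scoped PGame in
/-- for the disjoint sum `S₁ + S₂` of two shapes (with no comparabilities
between the parts), the ordered join `(S₁ + S₂) ⋈ G` is (identical, as a game, to) the
disjunctive sum `(S₁ ⋈ G|_{S₁}) + (S₂ ⋈ G|_{S₂})`. -/
theorem ojoin_disjoint_sum {S₁ S₂ : Type} [PartialOrder S₁] [PartialOrder S₂]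
    (G : S₁ ⊕ S₂ → PGame) (h : Acc OJRel G) :
    ojoin G ≡ ojoin (fun i : S₁ => G (Sum.inl i)) + ojoin (fun i : S₂ => G (Sum.inr i)) :=
  main_aux G h _ _ (funext fun s => by cases s <;> rfl)
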